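/- If K and K' are knots whose Jones polynomials satisfy V_{K'}(t) = ± t^n · V_K(t) for some integer n, then V_K = V_{K'} identically. In algebraic form: if f, g ∈ ℤ[t, t⁻¹] satisfy f(1) = g(1) = 1, both f - 1 and g - 1 are divisible by (t-1)(t³-1), and g = ± t^n f, then f = g. -/

import Mathlib

open LaurentPolynomial Polynomial

noncomputable def phi : LaurentPolynomial ℤ →+* ℤ :=
  AddMonoidAlgebra.liftNCRingHom (RingHom.id ℤ) 1 (fun _ _ => Commute.all _ _)

lemma phi_apply (f : LaurentPolynomial ℤ) : phi f = f.coeff.sum (fun _ a => a) := by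
  show (Finsupp.liftAddHom _) f.coeff = _
  rw [Finsupp.liftAddHom_apply]
  simp [Finsupp.sum]

lemma phi_T (n : ℤ) : phi (T n) = 1 := by
  rw [phi_apply, LaurentPolynomial.T, AddMonoidAlgebra.coeff_single]
  simp [Finsupp.sum]

lemma keyNat (m : ℕ)
    (h : (T 1 - 1) * ((T 3 : LaurentPolynomial ℤ) - 1) ∣ T (m : ℤ) - 1) : m = 0 := by
  obtain ⟨r, hr⟩ := h
  obtain ⟨N, r', hr'⟩ := r.exists_T_pow
  have h1 : (T 1 - 1 : LaurentPolynomial ℤ) = toLaurent (X - 1) := by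
    simp [Polynomial.toLaurent_X]
  have h3 : ((T 3 : LaurentPolynomial ℤ) - 1) = toLaurent (X ^ 3 - 1) := by
    simp [Polynomial.toLaurent_X_pow]
  have hm : (T (m : ℤ) - 1 : LaurentPolynomial ℤ) = toLaurent (X ^ m - 1) := by
    simp [Polynomial.toLaurent_X_pow]
  have heq : toLaurent ((X ^ m - 1) * X ^ N) = toLaurent ((X - 1) * (X ^ 3 - 1) * r') := by
    calc toLaurent ((X ^ m - 1) * X ^ N) = (T (m : ℤ) - 1) * T (N : ℤ) := by
          rw [map_mul, ← hm, Polynomial.toLaurent_X_pow]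
      _ = (T 1 - 1) * ((T 3 : LaurentPolynomial ℤ) - 1) * (r * T (N : ℤ)) := by
          rw [hr, mul_assoc]
      _ = toLaurent ((X - 1) * (X ^ 3 - 1) * r') := by
          rw [← hr', h1, h3, map_mul, map_mul]
  have heq2 : ((X ^ m - 1) * X ^ N : ℤ[X]) = (X - 1) * (X ^ 3 - 1) * r' :=
    Polynomial.toLaurent_injective heq
  have := congrArg (fun p : ℤ[X] => Polynomial.eval 1 (Polynomial.derivative p)) heq2
  simp [Polynomial.derivative_mul, Polynomial.derivative_X_pow] at this
  exact_mod_cast this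

lemma keyInt (n : ℤ)
    (h : (T 1 - 1) * ((T 3 : LaurentPolynomial ℤ) - 1) ∣ T n - 1) : n = 0 := by
  rcases le_or_gt 0 n with hn | hn
  · have := keyNat n.toNat (by rwa [Int.toNat_of_nonneg hn])
    omega
  · have h' : (T 1 - 1) * ((T 3 : LaurentPolynomial ℤ) - 1) ∣ T (-n) - 1 := by
      have : (T (-n) - 1 : LaurentPolynomial ℤ) = -T (-n) * (T n - 1) := by
        rw [mul_sub, neg_mul, ← T_add]
        simp
        abel
      rw [this]
      exact h.mul_left _
    have := keyNat (-n).toNat (by rwa [Int.toNat_of_nonneg (by omega)])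
    omega

theorem stmt15 (f g : LaurentPolynomial ℤ) (n : ℤ)
    (hf1 : f.coeff.sum (fun _ a => a) = 1) (hg1 : g.coeff.sum (fun _ a => a) = 1)
    (hf : (T 1 - 1) * ((T 3 : LaurentPolynomial ℤ) - 1) ∣ f - 1)
    (hg : (T 1 - 1) * ((T 3 : LaurentPolynomial ℤ) - 1) ∣ g - 1)
    (h : g = T n * f ∨ g = -(T n * f)) :
    f = g := by
  have hpf : phi f = 1 := by rw [phi_apply, hf1]
  have hpg : phi g = 1 := by rw [phi_apply, hg1]
  rcases h with h | h
  · have hdiv : (T 1 - 1) * ((T 3 : LaurentPolynomial ℤ) - 1) ∣ T n - 1 := by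
      have : (T n - 1 : LaurentPolynomial ℤ) = (g - 1) - (f - 1) - (T n - 1) * (f - 1) := by
        rw [h]; ring
      rw [this]
      exact dvd_sub (dvd_sub hg hf) (hf.mul_left _)
    have := keyInt n hdiv
    rw [h, this, T_zero, one_mul]
  · exfalso
    have := congrArg phi h
    rw [hpg, map_neg, map_mul, phi_T, hpf] at this
    norm_num at this
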